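/- For integers k ≥ 2 and n ≥ 2k, L(k, nk+1) = ∑_{i=0}^{n} L(k, ik). -/
import Mathlib


def genFib (k n : ℕ) : ℕ :=
  if h1 : n < k then n + 1
  else if h2 : k = 0 then 0
  else genFib k (n - 1) + genFib k (n - k)
  termination_by n
  decreasing_by all_goals omega

def genLucas (k n : ℕ) : ℕ :=
  if n < 2 * k then n + 1
  else (k - 1) * genFib k (n - (2 * k - 1)) + genFib k (n - (k - 1))

lemma genFib_rec (k m : ℕ) (hk : 1 ≤ k) :
    genFib k (m + k) = genFib k (m + k - 1) + genFib k m := by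
  conv_lhs => rw [genFib]
  rw [dif_neg (by omega : ¬ m + k < k), dif_neg (by omega : ¬ k = 0),
    Nat.add_sub_cancel]

lemma genFib_zero (k : ℕ) (hk : 1 ≤ k) : genFib k 0 = 1 := by
  rw [genFib, dif_pos (by omega)]

lemma genFib_one (k : ℕ) (hk : 2 ≤ k) : genFib k 1 = 2 := by
  rw [genFib, dif_pos (by omega)]

lemma genFib_two (k : ℕ) (hk : 2 ≤ k) : genFib k 2 = 3 := by
  rcases eq_or_lt_of_le hk with h | h
  · subst h
    have := genFib_rec 2 0 (by omega)
    simp only [zero_add] at this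
    rw [this, genFib_one 2 (by omega), genFib_zero 2 (by omega)]
  · rw [genFib, dif_pos h]

lemma sum_genFib (k : ℕ) (hk : 2 ≤ k) (N : ℕ) :
    (∑ i ∈ Finset.range (N + 1), genFib k (i * k + 1)) + 1 = genFib k (N * k + 2) := by
  induction N with
  | zero =>
    simp [genFib_one k hk, genFib_two k hk]
  | succ N ih =>
    rw [Finset.sum_range_succ]
    have h := genFib_rec k (N * k + 2) (by omega)
    have e1 : N * k + 2 + k = (N + 1) * k + 2 := by ring
    have e2 : N * k + 2 + k - 1 = (N + 1) * k + 1 := by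
      have : (N + 1) * k = N * k + k := by ring
      omega
    rw [e2, e1] at h
    omega

theorem stmt7 (k n : ℕ) (hk : 2 ≤ k) (hn : 2 * k ≤ n) :
    genLucas k (n * k + 1) = ∑ i ∈ Finset.range (n + 1), genLucas k (i * k) := by
  obtain ⟨m, rfl⟩ : ∃ m, n = m + 2 := ⟨n - 2, by omega⟩
  rw [show m + 2 + 1 = m + 1 + 1 + 1 from rfl, Finset.sum_range_succ',
    Finset.sum_range_succ']
  have hL0 : genLucas k (0 * k) = 1 := by
    rw [zero_mul, genLucas, if_pos (by omega)]
  have hL1 : genLucas k ((0 + 1) * k) = k + 1 := by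
    rw [genLucas, if_pos (by omega)]
    omega
  rw [hL0, hL1]
  -- evaluate the remaining Lucas terms
  have hL : ∀ i, genLucas k ((i + 1 + 1) * k) =
      (k - 1) * genFib k (i * k + 1) + genFib k ((i + 1) * k + 1) := by
    intro i
    have e0 : (i + 1 + 1) * k = i * k + 2 * k := by ring
    have e1 : (i + 1 + 1) * k - (2 * k - 1) = i * k + 1 := by omega
    have e2 : (i + 1 + 1) * k - (k - 1) = (i + 1) * k + 1 := by
      have : (i + 1) * k = i * k + k := by ring
      omega
    rw [genLucas, if_neg (by omega), e1, e2]
  -- evaluate LHS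
  have e0 : (m + 2) * k = m * k + 2 * k := by ring
  have e1 : (m + 2) * k + 1 - (2 * k - 1) = m * k + 2 := by omega
  have e2 : (m + 2) * k + 1 - (k - 1) = (m + 1) * k + 2 := by
    have : (m + 1) * k = m * k + k := by ring
    omega
  rw [genLucas, if_neg (by omega), e1, e2]
  simp only [hL]
  rw [Finset.sum_add_distrib, ← Finset.mul_sum]
  have hA := sum_genFib k hk m
  have hB := sum_genFib k hk (m + 1)
  have hshift : ∑ i ∈ Finset.range (m + 1 + 1), genFib k (i * k + 1) =
      (∑ i ∈ Finset.range (m + 1), genFib k ((i + 1) * k + 1)) + genFib k (0 * k + 1) := by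
    rw [Finset.sum_range_succ']
  rw [hshift] at hB
  simp only [zero_mul, zero_add, genFib_one k hk] at hB
  set SA := ∑ i ∈ Finset.range (m + 1), genFib k (i * k + 1) with hSA
  set SB := ∑ i ∈ Finset.range (m + 1), genFib k ((i + 1) * k + 1) with hSB
  rw [← hA, ← hB]
  have : (k - 1) * (SA + 1) = (k - 1) * SA + (k - 1) := by ring
  rw [this]
  generalize (k - 1) * SA = c
  omega
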